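/- Let G be a subgroup of ℚ, p a prime, n ≥ 1, and H a subgroup of G such that G/H ≅ ℤ/pⁿℤ. Then G is not divisible by p (G ≠ pG) and H = pⁿG. -/

import Mathlib

/-- Any two rationals lie in a common cyclic subgroup generated by an integer
combination of them. -/
lemma rat_common_gen (h x : ℚ) :
    ∃ (z : ℚ) (s t u v : ℤ), h = s • z ∧ x = t • z ∧ z = u • h + v • x := by
  have hd1 : (h.den : ℚ) ≠ 0 := by exact_mod_cast h.den_nz
  have hd2 : (x.den : ℚ) ≠ 0 := by exact_mod_cast x.den_nz
  set a : ℤ := h.num * x.den with ha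
  set b : ℤ := x.num * h.den with hb
  set m : ℤ := (h.den : ℤ) * x.den with hm
  have hm0 : ((m : ℤ) : ℚ) ≠ 0 := by
    rw [hm]; push_cast; exact mul_ne_zero hd1 hd2
  have hh : h = (a : ℚ) / m := by
    rw [eq_div_iff hm0, ha, hm]
    push_cast
    rw [← mul_assoc, Rat.mul_den_eq_num]
  have hxx : x = (b : ℚ) / m := by
    rw [eq_div_iff hm0, hb, hm]
    push_cast
    rw [mul_comm (h.den:ℚ), ← mul_assoc, Rat.mul_den_eq_num]
  set d : ℕ := Int.gcd a b with hd
  have key1 : ((a / (d:ℤ) : ℤ) : ℚ) * d = a := by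
    exact_mod_cast congrArg (Int.cast : ℤ → ℚ) (Int.ediv_mul_cancel (Int.gcd_dvd_left a b))
  have key2 : ((b / (d:ℤ) : ℤ) : ℚ) * d = b := by
    exact_mod_cast congrArg (Int.cast : ℤ → ℚ) (Int.ediv_mul_cancel (Int.gcd_dvd_right a b))
  refine ⟨(d : ℚ) / m, a / d, b / d, Int.gcdA a b, Int.gcdB a b, ?_, ?_, ?_⟩
  · rw [zsmul_eq_mul, mul_div_assoc', key1, ← hh]
  · rw [zsmul_eq_mul, mul_div_assoc', key2, ← hxx]
  · rw [zsmul_eq_mul, zsmul_eq_mul, hh, hxx,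
      mul_div_assoc', mul_div_assoc', ← add_div]
    congr 1
    have := congrArg (Int.cast : ℤ → ℚ) (Int.gcd_eq_gcd_ab a b)
    push_cast at this ⊢
    linarith [this]

/-- The additive group endomorphism `x ↦ n • x`; its range is the subgroup `nG`. -/
def zsmulHom (A : Type*) [AddCommGroup A] (n : ℤ) : A →+ A :=
  AddMonoidHom.mk' (fun x => n • x) (fun x y => smul_add n x y)

/-- If `G ≤ ℚ` and `G/H ≅ ℤ/pⁿℤ`, then `G` is not divisible by `p` and `H = pⁿG`. -/
theorem eq_pow_smul_of_quotient_iso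
    (G : AddSubgroup ℚ) (p n : ℕ) (hp : p.Prime) (hn : 1 ≤ n)
    (H : AddSubgroup ↥G)
    (hiso : Nonempty ((↥G ⧸ H) ≃+ ZMod (p ^ n))) :
    (zsmulHom ↥G (p : ℤ)).range ≠ ⊤ ∧ H = (zsmulHom ↥G ((p : ℤ) ^ n)).range := by
  obtain ⟨e⟩ := hiso
  haveI : Fact (1 < p ^ n) :=
    ⟨Nat.one_lt_pow (by omega) hp.one_lt⟩
  set A := ↥G
  set Q := A ⧸ H
  -- step 1 : `pⁿ • a ∈ H` for all `a : A`
  have step1 : ∀ a : A, ((p : ℤ) ^ n) • a ∈ H := by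
    intro a
    rw [← QuotientAddGroup.eq_zero_iff]
    have : ((QuotientAddGroup.mk ((p:ℤ)^n • a) : Q)) = ((p:ℤ)^n) • (QuotientAddGroup.mk a : Q) := rfl
    rw [this]
    apply e.injective
    rw [map_zsmul, map_zero]
    have : ((p:ℤ)^n) • e (QuotientAddGroup.mk a) = ((p^n : ℕ) : ZMod (p^n)) * e (QuotientAddGroup.mk a) := by
      push_cast
      rw [zsmul_eq_mul]
      push_cast
      ring
    rw [this, ZMod.natCast_self, zero_mul]
  -- the generator
  obtain ⟨x, hxmk⟩ := QuotientAddGroup.mk'_surjective H (e.symm 1)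
  have hordx : addOrderOf (QuotientAddGroup.mk x : Q) = p ^ n := by
    have h1 : (QuotientAddGroup.mk x : Q) = e.symm 1 := hxmk
    rw [h1]
    exact (addOrderOf_injective e.symm.toAddMonoidHom e.symm.injective 1).trans
      (ZMod.addOrderOf_one (p ^ n))
  -- step 2 : `H ≤ pⁿG`
  have step2 : ∀ h : A, h ∈ H → ∃ g : A, ((p:ℤ)^n) • g = h := by
    intro h hh
    obtain ⟨z, s, t, u, v, hs, ht, huv⟩ := rat_common_gen (h : ℚ) (x : ℚ)
    have hzG : z ∈ G := by
      rw [huv]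
      exact G.add_mem (G.zsmul_mem h.2 u) (G.zsmul_mem x.2 v)
    set zA : A := ⟨z, hzG⟩ with hzA
    have hsA : h = s • zA := by
      apply Subtype.ext
      rw [hs]; rfl
    have htA : x = t • zA := by
      apply Subtype.ext
      rw [ht]; rfl
    -- order of z̄ in Q is pⁿ
    set zq : Q := QuotientAddGroup.mk zA with hzq
    have hzord_dvd : addOrderOf zq ∣ p ^ n := by
      apply addOrderOf_dvd_of_nsmul_eq_zero
      have : ((p^n : ℕ) : ℤ) • zq = (0 : Q) := by
        have : ((p:ℤ)^n) • zq = (QuotientAddGroup.mk (((p:ℤ)^n) • zA) : Q) := rfl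
        rw [← QuotientAddGroup.eq_zero_iff] at *
        push_cast
        rw [this]
        exact (QuotientAddGroup.eq_zero_iff _).mpr (step1 zA)
      exact_mod_cast this
    have hdvd_zord : p ^ n ∣ addOrderOf zq := by
      rw [← hordx]
      apply addOrderOf_dvd_of_nsmul_eq_zero
      have hxq : (QuotientAddGroup.mk x : Q) = t • zq := by
        rw [htA]; rfl
      rw [hxq, smul_comm]
      have : (addOrderOf zq) • zq = 0 := addOrderOf_nsmul_eq_zero zq
      rw [this, smul_zero]
    have hzord : addOrderOf zq = p ^ n := Nat.dvd_antisymm hzord_dvd hdvd_zord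
    -- `s` is divisible by `pⁿ`
    have hsz : s • zq = (0 : Q) := by
      have h2 : s • zq = (QuotientAddGroup.mk (s • zA) : Q) := rfl
      rw [h2, QuotientAddGroup.eq_zero_iff, ← hsA]
      exact hh
    have : ((addOrderOf zq : ℕ) : ℤ) ∣ s := addOrderOf_dvd_iff_zsmul_eq_zero.mpr hsz
    rw [hzord] at this
    obtain ⟨s', hs'⟩ := this
    refine ⟨s' • zA, ?_⟩
    rw [hsA, hs', smul_smul]
    push_cast
    ring_nf
  -- conclusion part 2
  have part2 : H = (zsmulHom A ((p : ℤ) ^ n)).range := by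
    ext a
    constructor
    · intro ha
      obtain ⟨g, hg⟩ := step2 a ha
      exact ⟨g, hg⟩
    · rintro ⟨g, rfl⟩
      exact step1 g
  refine ⟨?_, part2⟩
  -- part 1
  intro htop
  have hdiv : ∀ (k : ℕ) (a : A), ∃ b : A, ((p:ℤ)^k) • b = a := by
    intro k
    induction k with
    | zero => intro a; exact ⟨a, by simp⟩
    | succ k ih =>
      intro a
      have : a ∈ (zsmulHom A (p : ℤ)).range := htop ▸ AddSubgroup.mem_top a
      obtain ⟨b, hb⟩ := this
      obtain ⟨c, hc⟩ := ih b
      refine ⟨c, ?_⟩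
      have : ((p:ℤ)^(k+1)) • c = (p:ℤ) • ((p:ℤ)^k • c) := by
        rw [smul_smul, pow_succ, mul_comm]
      rw [this, hc]
      exact hb
  have hHtop : H = ⊤ := by
    rw [part2]
    rw [eq_top_iff]
    intro a _
    obtain ⟨b, hb⟩ := hdiv n a
    exact ⟨b, hb⟩
  have hx0 : (QuotientAddGroup.mk x : Q) = 0 :=
    (QuotientAddGroup.eq_zero_iff x).mpr (hHtop ▸ AddSubgroup.mem_top x)
  rw [hx0, addOrderOf_zero] at hordx
  have := Fact.out (p := 1 < p ^ n)
  omega
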